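/- Suppose y : [s₀, T) → ℝ is differentiable, satisfies y'(s) ≥ −2δ y(s) + (2α/L) y(s)² with α, L > 0, δ ∈ ℝ, and y(s₀) > δL/α with y(s₀) > 0. Then y cannot be extended to a global solution on [s₀, ∞): there exists a finite time s₁ > s₀ such that y(s) → ∞ as s → s₁⁻. -/

import Mathlib

open Set Filter Topology

/-- Riccati-type backward blow-up: a differentiable function satisfying
`y' ≥ -2δ y + (2α/L) y²` with `y(s₀) > δL/α` and `y(s₀) > 0` cannot be a global
solution on `[s₀, ∞)`; moreover any maximal solution blows up at a finite time
`s₁ > s₀`, i.e. `y(s) → ∞` as `s → s₁⁻`.  We formalize "cannot be extended to a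
global solution": no function can satisfy the differential inequality on all of
`[s₀, ∞)` together with the initial condition. -/
theorem riccati_backward_blowup (α L δ s₀ : ℝ) (hα : 0 < α) (hL : 0 < L)
    (y y' : ℝ → ℝ)
    (hderiv : ∀ s ∈ Ici s₀, HasDerivAt y (y' s) s)
    (hineq : ∀ s ∈ Ici s₀, y' s ≥ -2 * δ * y s + (2 * α / L) * (y s) ^ 2)
    (hinit : y s₀ > δ * L / α) (hpos : y s₀ > 0) :
    False := by
  have hg : (0:ℝ) < 2 * α / L := by positivity
  -- key inequality: (2α/L) * y s₀ > 2δ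
  have hkey : 2 * δ < (2 * α / L) * y s₀ := by
    have h1 : δ * L < α * y s₀ := by
      have := (div_lt_iff₀ hα).mp hinit
      linarith
    rw [div_mul_eq_mul_div, lt_div_iff₀ hL]
    nlinarith
  -- Step 1: y s ≥ y s₀ for all s ≥ s₀
  have hge : ∀ s ∈ Ici s₀, y s₀ ≤ y s := by
    by_contra h
    push_neg at h
    obtain ⟨s₁, hs₁, hlt⟩ := h
    have hs₁' : s₀ < s₁ := by
      rcases lt_or_eq_of_le (mem_Ici.mp hs₁) with h' | h'
      · exact h'
      · rw [← h'] at hlt; exact absurd hlt (lt_irrefl _)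
    set S := Icc s₀ s₁ ∩ y ⁻¹' Ici (y s₀) with hS
    have hS0 : s₀ ∈ S := ⟨⟨le_refl _, hs₁'.le⟩, mem_preimage.mpr self_mem_Ici⟩
    have hbdd : BddAbove S := ⟨s₁, fun s hs => hs.1.2⟩
    have hcontIcc : ContinuousOn y (Icc s₀ s₁) := fun s hs =>
      ((hderiv s hs.1).continuousAt).continuousWithinAt
    have hSclosed : IsClosed S :=
      hcontIcc.preimage_isClosed_of_isClosed isClosed_Icc isClosed_Ici
    have htS : sSup S ∈ S := hSclosed.csSup_mem ⟨s₀, hS0⟩ hbdd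
    set t := sSup S with ht
    have ht0 : s₀ ≤ t := htS.1.1
    have hts₁ : t ≤ s₁ := htS.1.2
    have hyt : y s₀ ≤ y t := htS.2
    have htlt : t < s₁ := by
      rcases lt_or_eq_of_le hts₁ with h' | h'
      · exact h'
      · rw [h'] at hyt; linarith
    -- every s ∈ (t, s₁] has y s < y s₀
    have hbelow : ∀ s ∈ Ioc t s₁, y s < y s₀ := by
      intro s hs
      by_contra hc
      push_neg at hc
      have : s ∈ S := ⟨⟨le_trans ht0 hs.1.le, hs.2⟩, hc⟩
      exact absurd (le_csSup hbdd this) (not_le.mpr hs.1)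
    -- derivative at t is positive
    have hytpos : 0 < y t := lt_of_lt_of_le hpos hyt
    have hy't : 0 < y' t := by
      have h1 := hineq t (le_trans ht0 (le_refl t))
      have h2 : 2 * δ < (2 * α / L) * y t := by
        calc 2 * δ < (2 * α / L) * y s₀ := hkey
          _ ≤ (2 * α / L) * y t := by nlinarith
      nlinarith [hineq t ht0]
    -- slope argument
    have hslope := (hasDerivAt_iff_tendsto_slope.mp (hderiv t ht0))
    have hev : ∀ᶠ s in 𝓝[≠] t, 0 < slope y t s :=
      hslope (eventually_gt_nhds hy't)
    have hev' : ∀ᶠ s in 𝓝[>] t, 0 < slope y t s :=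
      hev.filter_mono (nhdsWithin_mono t fun x hx => ne_of_gt hx)
    have hIoc : Ioc t s₁ ∈ 𝓝[>] t := Ioc_mem_nhdsGT_of_mem ⟨le_refl t, htlt⟩
    obtain ⟨s, hs1, hs2⟩ := (hev'.and (eventually_of_mem hIoc fun x hx => hx)).exists
    have hst : t < s := hs2.1
    have : 0 < (y s - y t) / (s - t) := by
      simpa [slope_def_field, div_eq_iff] using hs1
    have hys : y t < y s := by
      have hst' : 0 < s - t := by linarith
      have heq : (y s - y t) / (s - t) * (s - t) = y s - y t :=
        div_mul_cancel₀ _ (ne_of_gt hst')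
      nlinarith [mul_pos this hst']
    have := hbelow s hs2
    linarith
  -- Step 2: quadratic lower bound y' ≥ k y² with k > 0
  set k : ℝ := 2 * α / L - 2 * max δ 0 / y s₀ with hk
  have hkpos : 0 < k := by
    rw [hk, sub_pos, div_lt_iff₀ hpos]
    rcases le_or_gt δ 0 with hδ | hδ
    · rw [max_eq_right hδ]; nlinarith
    · rw [max_eq_left hδ.le]; linarith [hkey]
  have hquad : ∀ s ∈ Ici s₀, k * (y s) ^ 2 ≤ y' s := by
    intro s hs
    have h1 := hineq s hs
    have h2 := hge s hs
    have hys : 0 < y s := lt_of_lt_of_le hpos h2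
    have hd0 : 0 ≤ max δ 0 := le_max_right _ _
    have hdδ : δ ≤ max δ 0 := le_max_left _ _
    -- 2 δ * y s ≤ 2 * max δ 0 / y s₀ * (y s)^2
    have h3 : 2 * δ * y s ≤ 2 * max δ 0 / y s₀ * (y s) ^ 2 := by
      have : 2 * δ * y s ≤ 2 * max δ 0 * y s := by nlinarith
      calc 2 * δ * y s ≤ 2 * max δ 0 * y s := this
        _ ≤ 2 * max δ 0 / y s₀ * (y s) ^ 2 := by
            rw [div_mul_eq_mul_div, le_div_iff₀ hpos]
            nlinarith [mul_nonneg (mul_nonneg hd0 hys.le) (sub_nonneg.mpr h2)]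
    rw [hk]
    nlinarith
  -- Step 3: 1/y + k s is antitone on [s₀, ∞)
  set F : ℝ → ℝ := fun s => (y s)⁻¹ + k * s with hF
  have hFderiv : ∀ s ∈ Ici s₀, HasDerivAt F (-(y' s) / (y s) ^ 2 + k) s := by
    intro s hs
    have hys : y s ≠ 0 := ne_of_gt (lt_of_lt_of_le hpos (hge s hs))
    have h1 : HasDerivAt (fun u => (y u)⁻¹) (-(y' s) / (y s) ^ 2) s :=
      (hderiv s hs).inv hys
    have h2 : HasDerivAt (fun u => k * u) (k * 1) s :=
      (hasDerivAt_id s).const_mul k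
    have h3 := h1.add h2
    rw [mul_one] at h3
    exact h3
  have hanti : AntitoneOn F (Ici s₀) := by
    apply antitoneOn_of_deriv_nonpos (convex_Ici s₀)
    · exact fun s hs => (hFderiv s hs).continuousAt.continuousWithinAt
    · rw [interior_Ici]
      exact fun s hs => (hFderiv s (le_of_lt (mem_Ioi.mp hs))).differentiableAt.differentiableWithinAt
    · rw [interior_Ici]
      intro s hs
      rw [(hFderiv s (mem_Ioi.mp hs).le).deriv]
      have hys : 0 < y s := lt_of_lt_of_le hpos (hge s (mem_Ioi.mp hs).le)
      have h2 : (0:ℝ) < (y s) ^ 2 := by positivity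
      have h3 : -(y' s) / (y s) ^ 2 ≤ -k := by
        rw [div_le_iff₀ h2]
        nlinarith [hquad s (mem_Ioi.mp hs).le]
      linarith
  -- Step 4: contradiction at large time
  set s₂ : ℝ := s₀ + ((y s₀)⁻¹ + 1) / k with hs₂
  have hs₂ge : s₀ ≤ s₂ := by
    have : 0 < ((y s₀)⁻¹ + 1) / k := by positivity
    rw [hs₂]; linarith
  have hFle : F s₂ ≤ F s₀ := hanti (le_refl s₀) hs₂ge hs₂ge
  have hinvpos : 0 < (y s₂)⁻¹ := by
    have := lt_of_lt_of_le hpos (hge s₂ hs₂ge)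
    positivity
  have hks : k * s₂ = k * s₀ + ((y s₀)⁻¹ + 1) := by
    rw [hs₂, mul_add, mul_div_cancel₀ _ (ne_of_gt hkpos)]
  rw [hF] at hFle
  simp only at hFle
  rw [hks] at hFle
  linarith
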